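/- For all m ≥ 1 and k ≥ 1, the directions of the persistent walk satisfy E(D_m · D_{m+k}) = (−1/(2d−1))^k, where · denotes the Euclidean inner product on ℝ^d. -/

import Mathlib

open MeasureTheory ProbabilityTheory Filter
open scoped ENNReal

noncomputable section

/-- The `2d` unit vectors `±e_i` of `ℤ^d ⊆ ℝ^d`. -/
def unitVecs (d : ℕ) : Set (EuclideanSpace ℝ (Fin d)) :=
  {v | ∃ i : Fin d, v = EuclideanSpace.single i 1 ∨ v = EuclideanSpace.single i (-1)}

/-- The random times `τ_n = T_1 + ⋯ + T_n` (with `τ_0 = 0`). -/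
def tauT {Ω : Type} (T : ℕ → Ω → ℕ) (n : ℕ) (ω : Ω) : ℕ :=
  ∑ k ∈ Finset.Icc 1 n, T k ω

/-- The inverse time change `τ⁻¹_n = inf {m ≥ 1 : τ_m ≥ n}`. -/
def tauInv {Ω : Type} (T : ℕ → Ω → ℕ) (n : ℕ) (ω : Ω) : ℕ :=
  sInf {m : ℕ | 1 ≤ m ∧ n ≤ tauT T m ω}

/-- The σ-field `F_k = σ(D_1, T_1, …, D_k, T_k)`. -/
def walkSigma {Ω β : Type} [MeasurableSpace Ω] [MeasurableSpace β]
    (D : ℕ → Ω → β) (T : ℕ → Ω → ℕ) (k : ℕ) : MeasurableSpace Ω :=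
  ⨆ m ∈ Finset.Icc 1 k,
    (MeasurableSpace.comap (D m) inferInstance ⊔ MeasurableSpace.comap (T m) inferInstance)

/-- The filtration `(F_{n+1})_{n ≥ 0}`, i.e. `(F_n)_{n ≥ 1}` reindexed from `0`. -/
def walkFiltration {Ω β : Type} [m0 : MeasurableSpace Ω] [MeasurableSpace β]
    (D : ℕ → Ω → β) (T : ℕ → Ω → ℕ)
    (measD : ∀ m, Measurable (D m)) (measT : ∀ m, Measurable (T m)) :
    Filtration ℕ m0 where
  seq n := walkSigma D T (n + 1)
  mono' := by
    intro i j hij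
    refine iSup_le fun m => iSup_le fun hm => ?_
    refine le_iSup₂_of_le m ?_ le_rfl
    simp only [Finset.mem_Icc] at hm ⊢
    omega
  le' := by
    intro n
    refine iSup_le fun m => iSup_le fun _ => sup_le ?_ ?_
    · exact (measD m).comap_le
    · exact (measT m).comap_le

section helpers
variable {Ω β : Type}

theorem tauT_mono (T : ℕ → Ω → ℕ) (ω : Ω) : Monotone fun m => tauT T m ω := by
  intro a b hab
  exact Finset.sum_le_sum_of_subset (Finset.Icc_subset_Icc_right hab)

theorem self_le_tauT (T : ℕ → Ω → ℕ) (T_pos : ∀ m ω, 1 ≤ T m ω) (n : ℕ) (ω : Ω) :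
    n ≤ tauT T n ω := by
  calc n = ∑ _k ∈ Finset.Icc 1 n, 1 := by simp
  _ ≤ tauT T n ω := Finset.sum_le_sum fun k _ => T_pos k ω

theorem tauInv_le_iff (T : ℕ → Ω → ℕ) (T_pos : ∀ m ω, 1 ≤ T m ω) (n k : ℕ) (hk : 1 ≤ k) :
    {ω | tauInv T n ω ≤ k} = {ω | n ≤ tauT T k ω} := by
  ext ω
  simp only [Set.mem_setOf_eq, tauInv]
  constructor
  · intro hle
    rcases Nat.eq_zero_or_pos n with hn | hn
    · omega
    · have hne : {m : ℕ | 1 ≤ m ∧ n ≤ tauT T m ω}.Nonempty :=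
        ⟨n, hn, self_le_tauT T T_pos n ω⟩
      obtain ⟨h1, h2⟩ := Nat.sInf_mem hne
      exact le_trans h2 (tauT_mono T ω hle)
  · intro hle
    exact Nat.sInf_le ⟨hk, hle⟩

theorem measurable_tauT_walkSigma [MeasurableSpace Ω] [MeasurableSpace β]
    (D : ℕ → Ω → β) (T : ℕ → Ω → ℕ) (k : ℕ) :
    Measurable[walkSigma D T k] (tauT T k) := by
  apply Finset.measurable_sum
  intro m hm
  refine measurable_iff_comap_le.2 (le_trans ?_ (le_iSup₂_of_le m hm le_rfl))
  exact le_sup_right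

theorem measurableSet_tauInv_le [MeasurableSpace Ω] [MeasurableSpace β]
    (D : ℕ → Ω → β) (T : ℕ → Ω → ℕ) (T_pos : ∀ m ω, 1 ≤ T m ω) (n k : ℕ) (hk : 1 ≤ k) :
    MeasurableSet[walkSigma D T k] {ω | tauInv T n ω ≤ k} := by
  rw [tauInv_le_iff T T_pos n k hk]
  exact measurable_tauT_walkSigma D T k measurableSet_Ici

end helpers

/-- The σ-field `{A : A ∩ {σ ≤ k} ∈ F_k for all k = 1, …, n}` associated with a
random time `σ` bounded by `n`. -/
def stoppedSigma {Ω : Type} (F : ℕ → MeasurableSpace Ω) (σf : Ω → ℕ) (n : ℕ)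
    (h : ∀ k, 1 ≤ k → k ≤ n → MeasurableSet[F k] {ω | σf ω ≤ k}) : MeasurableSpace Ω where
  MeasurableSet' A := ∀ k, 1 ≤ k → k ≤ n → MeasurableSet[F k] (A ∩ {ω | σf ω ≤ k})
  measurableSet_empty := fun k _ _ => by
    simp
  measurableSet_compl := fun A hA k hk1 hk2 => by
    have hs : MeasurableSet[F k] {ω | σf ω ≤ k} := h k hk1 hk2
    have heq : Aᶜ ∩ {ω | σf ω ≤ k} = {ω | σf ω ≤ k} \ (A ∩ {ω | σf ω ≤ k}) := by
      ext ω; by_cases hω : σf ω ≤ k <;> simp [hω]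
    rw [heq]
    exact hs.diff (hA k hk1 hk2)
  measurableSet_iUnion := fun s hs k hk1 hk2 => by
    rw [Set.iUnion_inter]
    exact MeasurableSet.iUnion fun i => hs i k hk1 hk2

/-- The σ-field `F_{τ⁻¹_n} = {A : A ∩ {τ⁻¹_n ≤ k} ∈ F_k for all k = 1, …, n}`. -/
def Fstop {Ω β : Type} [MeasurableSpace Ω] [MeasurableSpace β]
    (D : ℕ → Ω → β) (T : ℕ → Ω → ℕ) (T_pos : ∀ m ω, 1 ≤ T m ω) (n : ℕ) :
    MeasurableSpace Ω :=
  stoppedSigma (walkSigma D T) (tauInv T n) n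
    (fun k hk1 _ => measurableSet_tauInv_le D T T_pos n k hk1)

/-- The persistent direction chain: `D_1` uniform on the `2d` unit vectors and, given `D_m`,
`D_{m+1}` uniform on the `2d - 1` unit vectors different from `D_m`; the law is specified
through its path probabilities. -/
structure DirectionChain (d : ℕ) (Ω : Type) [MeasurableSpace Ω] (μ : Measure Ω) where
  D : ℕ → Ω → EuclideanSpace ℝ (Fin d)
  measD : ∀ m, Measurable (D m)
  D_mem : ∀ m ω, D m ω ∈ unitVecs d
  D_path : ∀ n : ℕ, 1 ≤ n → ∀ v : ℕ → EuclideanSpace ℝ (Fin d),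
    (∀ m, v m ∈ unitVecs d) →
    (∀ m, 1 ≤ m → m + 1 ≤ n → v (m + 1) ≠ v m) →
    μ {ω | ∀ m, 1 ≤ m → m ≤ n → D m ω = v m}
      = ENNReal.ofReal ((2 * (d : ℝ))⁻¹ * ((2 * (d : ℝ) - 1)⁻¹) ^ (n - 1))

namespace PWaux

open EuclideanSpace
attribute [local instance 10] Classical.propDecidable

variable {d : ℕ}

/-- The set of unit vectors as a `Finset`. -/
def Vd (d : ℕ) : Finset (EuclideanSpace ℝ (Fin d)) :=
  (Finset.univ.image fun i : Fin d => EuclideanSpace.single i (1:ℝ)) ∪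
  (Finset.univ.image fun i : Fin d => EuclideanSpace.single i (-1:ℝ))

lemma mem_Vd {x : EuclideanSpace ℝ (Fin d)} : x ∈ Vd d ↔ x ∈ unitVecs d := by
  simp only [Vd, Finset.mem_union, Finset.mem_image, Finset.mem_univ, true_and, unitVecs,
    Set.mem_setOf_eq]
  constructor
  · rintro (⟨i, hi⟩ | ⟨i, hi⟩) <;> exact ⟨i, by simp [hi.symm]⟩
  · rintro ⟨i, hi | hi⟩
    · exact Or.inl ⟨i, hi.symm⟩
    · exact Or.inr ⟨i, hi.symm⟩

lemma single_injective (a : ℝ) (ha : a ≠ 0) :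
    Function.Injective (fun i : Fin d => EuclideanSpace.single i a) := by
  intro i j h
  by_contra hij
  have := congrArg (fun v : EuclideanSpace ℝ (Fin d) => v i) h
  simp [EuclideanSpace.single_apply, hij, ha] at this

lemma single_one_ne_neg (i j : Fin d) :
    EuclideanSpace.single i (1:ℝ) ≠ EuclideanSpace.single j (-1:ℝ) := by
  intro h
  have := congrArg (fun v : EuclideanSpace ℝ (Fin d) => v i) h
  simp only [EuclideanSpace.single_apply, if_pos rfl] at this
  by_cases hij : i = j <;> simp [hij] at this <;> norm_num at this

lemma card_Vd : (Vd d).card = 2 * d := by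
  rw [Vd, Finset.card_union_of_disjoint, Finset.card_image_of_injective _ (single_injective 1 one_ne_zero),
    Finset.card_image_of_injective _ (single_injective (-1) (by norm_num))]
  · simp [Finset.card_univ]; ring
  · rw [Finset.disjoint_left]
    rintro x hx hx'
    simp only [Finset.mem_image, Finset.mem_univ, true_and] at hx hx'
    obtain ⟨i, rfl⟩ := hx
    obtain ⟨j, hj⟩ := hx'
    exact single_one_ne_neg i j hj.symm

lemma sum_inner_Vd (x : EuclideanSpace ℝ (Fin d)) :
    ∑ w ∈ Vd d, (inner ℝ x w : ℝ) = 0 := by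
  rw [Vd, Finset.sum_union, Finset.sum_image (fun a _ b _ h => single_injective 1 one_ne_zero h),
    Finset.sum_image (fun a _ b _ h => single_injective (-1) (by norm_num) h)]
  · simp only [EuclideanSpace.inner_single_right]
    simp [← Finset.sum_add_distrib]
  · rw [Finset.disjoint_left]
    rintro y hy hy'
    simp only [Finset.mem_image, Finset.mem_univ, true_and] at hy hy'
    obtain ⟨i, rfl⟩ := hy
    obtain ⟨j, hj⟩ := hy'
    exact single_one_ne_neg i j hj.symm

lemma norm_of_mem_unitVecs {x : EuclideanSpace ℝ (Fin d)} (hx : x ∈ unitVecs d) : ‖x‖ = 1 := by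
  obtain ⟨i, rfl | rfl⟩ := hx <;> simp

lemma inner_self_of_mem_unitVecs {x : EuclideanSpace ℝ (Fin d)} (hx : x ∈ unitVecs d) :
    (inner ℝ x x : ℝ) = 1 := by
  rw [real_inner_self_eq_norm_sq, norm_of_mem_unitVecs hx]; norm_num

lemma abs_inner_le_one {x y : EuclideanSpace ℝ (Fin d)} (hx : x ∈ unitVecs d)
    (hy : y ∈ unitVecs d) : |(inner ℝ x y : ℝ)| ≤ 1 := by
  calc |(inner ℝ x y : ℝ)| ≤ ‖x‖ * ‖y‖ := abs_real_inner_le_norm x y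
  _ = 1 := by rw [norm_of_mem_unitVecs hx, norm_of_mem_unitVecs hy]; norm_num


/-- The extension of a path `p : Fin (n+1) → Vd d` (thought of as the values `D_1, …, D_{n+1}`)
to a function `ℕ → ℝ^d` taking values in the unit vectors. -/
def pext {n : ℕ} (p : Fin (n+1) → {x // x ∈ Vd d}) (m : ℕ) : EuclideanSpace ℝ (Fin d) :=
  (p ⟨min (m-1) n, by omega⟩ : EuclideanSpace ℝ (Fin d))

lemma pext_mem {n : ℕ} (p : Fin (n+1) → {x // x ∈ Vd d}) (m : ℕ) : pext p m ∈ unitVecs d :=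
  mem_Vd.mp (p _).2

lemma pext_eq {n m : ℕ} (p : Fin (n+1) → {x // x ∈ Vd d}) (h2 : m ≤ n + 1) :
    pext p m = (p ⟨m - 1, by omega⟩ : EuclideanSpace ℝ (Fin d)) := by
  have h : (⟨min (m-1) n, by omega⟩ : Fin (n+1)) = ⟨m - 1, by omega⟩ := Fin.ext (by simp; omega)
  rw [pext, h]

/-- Admissibility of a path: consecutive values differ. -/
def adm (n : ℕ) (p : Fin (n+1) → {x // x ∈ Vd d}) : Prop :=
  ∀ j, 1 ≤ j → j + 1 ≤ n + 1 → pext p (j+1) ≠ pext p j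

def Padm (d n : ℕ) : Finset (Fin (n+1) → {x // x ∈ Vd d}) := Finset.univ.filter (adm n)

lemma pext_snoc {n : ℕ} (q : Fin (n+1) → {x // x ∈ Vd d}) (w : {x // x ∈ Vd d}) {m : ℕ}
    (hm : m ≤ n+1) : pext (Fin.snoc q w) m = pext q m := by
  have h1 : (⟨min (m-1) (n+1), by omega⟩ : Fin (n+2))
      = Fin.castSucc ⟨min (m-1) n, by omega⟩ := Fin.ext (by simp; omega)
  rw [pext, h1, Fin.snoc_castSucc, pext]

lemma pext_snoc_top {n : ℕ} (q : Fin (n+1) → {x // x ∈ Vd d}) (w : {x // x ∈ Vd d}) :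
    pext (Fin.snoc q w) (n+2) = (w : EuclideanSpace ℝ (Fin d)) := by
  have h1 : (⟨min (n+2-1) (n+1), by omega⟩ : Fin (n+2)) = Fin.last (n+1) := Fin.ext (by simp)
  rw [pext, h1, Fin.snoc_last]

lemma adm_snoc {n : ℕ} (q : Fin (n+1) → {x // x ∈ Vd d}) (w : {x // x ∈ Vd d}) :
    adm (n+1) (Fin.snoc q w) ↔
      adm n q ∧ (w : EuclideanSpace ℝ (Fin d)) ≠ pext q (n+1) := by
  constructor
  · intro H
    refine ⟨fun j h1 h2 => ?_, ?_⟩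
    · have := H j h1 (by omega)
      rwa [pext_snoc q w (by omega), pext_snoc q w (by omega)] at this
    · have := H (n+1) (by omega) (by omega)
      rwa [pext_snoc_top, pext_snoc q w (by omega)] at this
  · rintro ⟨H1, H2⟩ j h1 h2
    rcases Nat.lt_or_ge j (n+1) with hj | hj
    · rw [pext_snoc q w (by omega), pext_snoc q w (by omega)]
      exact H1 j h1 (by omega)
    · have hj' : j = n+1 := by omega
      subst hj'
      rw [pext_snoc_top, pext_snoc q w (by omega)]
      exact H2

/-- The correlation sums over admissible paths. -/
def pathSum (d n a : ℕ) : ℝ :=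
  ∑ p ∈ Padm d n, (inner ℝ (pext p a) (pext p (n+1)) : ℝ)

lemma sum_ne_eq_neg_inner (x : EuclideanSpace ℝ (Fin d)) {u : EuclideanSpace ℝ (Fin d)}
    (hu : u ∈ Vd d) :
    ∑ w : {x // x ∈ Vd d},
        (if (w : EuclideanSpace ℝ (Fin d)) ≠ u then (inner ℝ x (w : EuclideanSpace ℝ (Fin d)) : ℝ) else 0)
      = -(inner ℝ x u : ℝ) := by
  have h0 : ∑ w : {x // x ∈ Vd d}, (inner ℝ x (w : EuclideanSpace ℝ (Fin d)) : ℝ) = 0 := by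
    rw [Finset.sum_coe_sort (Vd d) (fun w => (inner ℝ x w : ℝ))]
    exact sum_inner_Vd x
  have hsplit : ∀ w : {x // x ∈ Vd d},
      (if (w : EuclideanSpace ℝ (Fin d)) ≠ u then (inner ℝ x (w : EuclideanSpace ℝ (Fin d)) : ℝ) else 0)
        = (inner ℝ x (w : EuclideanSpace ℝ (Fin d)) : ℝ)
          - (if (w : EuclideanSpace ℝ (Fin d)) = u then (inner ℝ x (w : EuclideanSpace ℝ (Fin d)) : ℝ) else 0) := by
    intro w
    by_cases h : (w : EuclideanSpace ℝ (Fin d)) = u <;> simp [h]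
  rw [Finset.sum_congr rfl fun w _ => hsplit w, Finset.sum_sub_distrib, h0, zero_sub]
  congr 1
  rw [Finset.sum_eq_single_of_mem (⟨u, hu⟩ : {x // x ∈ Vd d}) (Finset.mem_univ _)]
  · simp
  · intro w _ hw
    have : (w : EuclideanSpace ℝ (Fin d)) ≠ u := fun h => hw (Subtype.ext h)
    simp [this]

lemma pathSum_succ (n a : ℕ) (ha2 : a ≤ n + 1) :
    pathSum d (n+1) a = - pathSum d n a := by
  rw [pathSum, Padm, Finset.sum_filter]
  rw [← Equiv.sum_comp (Fin.snocEquiv (fun _ => ({x // x ∈ Vd d})))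
    (fun p => if adm (n+1) p then (inner ℝ (pext p a) (pext p (n+2)) : ℝ) else 0)]
  rw [Fintype.sum_prod_type_right]
  have key : ∀ q : Fin (n+1) → {x // x ∈ Vd d},
      (∑ w : {x // x ∈ Vd d},
        if adm (n+1) (Fin.snocEquiv (fun _ => ({x // x ∈ Vd d})) (w, q))
        then (inner ℝ (pext (Fin.snocEquiv (fun _ => ({x // x ∈ Vd d})) (w, q)) a)
            (pext (Fin.snocEquiv (fun _ => ({x // x ∈ Vd d})) (w, q)) (n+2)) : ℝ) else 0)
      = if adm n q then -(inner ℝ (pext q a) (pext q (n+1)) : ℝ) else 0 := by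
    intro q
    have hsnoc : ∀ w : {x // x ∈ Vd d},
        (Fin.snocEquiv (fun _ => ({x // x ∈ Vd d})) (w, q)) = Fin.snoc q w := by
      intro w; funext i; rfl
    simp only [hsnoc]
    by_cases hq : adm n q
    · rw [if_pos hq, ← sum_ne_eq_neg_inner (pext q a) (mem_Vd.mpr (pext_mem q (n+1)))]
      refine Finset.sum_congr rfl fun w _ => ?_
      rw [adm_snoc]
      by_cases hw : (w : EuclideanSpace ℝ (Fin d)) ≠ pext q (n+1)
      · rw [if_pos ⟨hq, hw⟩, if_pos hw, pext_snoc q w (by omega), pext_snoc_top]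
      · rw [if_neg (fun h => hw h.2), if_neg hw]
    · rw [if_neg hq]
      refine Finset.sum_eq_zero fun w _ => ?_
      rw [adm_snoc, if_neg (fun h => hq h.1)]
  rw [Finset.sum_congr rfl fun q _ => key q]
  rw [pathSum, Padm, Finset.sum_filter, ← Finset.sum_neg_distrib]
  exact Finset.sum_congr rfl fun q _ => by by_cases hq : adm n q <;> simp [hq]

lemma pathSum_base (n : ℕ) : pathSum d n (n+1) = ((Padm d n).card : ℝ) := by
  rw [pathSum, Finset.sum_congr rfl
    (fun p _ => inner_self_of_mem_unitVecs (pext_mem p (n+1)))]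
  simp

lemma pathSum_eq (a k : ℕ) (ha : 1 ≤ a) :
    pathSum d (a - 1 + k) a = (-1 : ℝ)^k * ((Padm d (a-1)).card : ℝ) := by
  induction k with
  | zero =>
    have : a - 1 + 0 = a - 1 := by omega
    rw [this, pow_zero, one_mul]
    have h2 : a = (a - 1) + 1 := by omega
    rw [h2] at *
    exact pathSum_base (a - 1)
  | succ k ih =>
    have : a - 1 + (k + 1) = (a - 1 + k) + 1 := by omega
    rw [this, pathSum_succ (a - 1 + k) a (by omega), ih]
    ring


variable {Ω : Type} [MeasurableSpace Ω] {μ : Measure Ω} [IsProbabilityMeasure μ]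

/-- The elementary path events. -/
def Apath (C : DirectionChain d Ω μ) (n : ℕ) (p : Fin (n+1) → {x // x ∈ Vd d}) : Set Ω :=
  {ω | ∀ m, 1 ≤ m → m ≤ n + 1 → C.D m ω = pext p m}

lemma measurableSet_eventEq (C : DirectionChain d Ω μ) (v : ℕ → EuclideanSpace ℝ (Fin d))
    (N : ℕ) : MeasurableSet {ω | ∀ m, 1 ≤ m → m ≤ N → C.D m ω = v m} := by
  have h : {ω | ∀ m, 1 ≤ m → m ≤ N → C.D m ω = v m}
      = ⋂ m, ⋂ (_ : 1 ≤ m), ⋂ (_ : m ≤ N), (C.D m) ⁻¹' {v m} := by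
    ext ω; simp [Set.mem_iInter, Set.mem_preimage]
  rw [h]
  exact MeasurableSet.iInter fun m => MeasurableSet.iInter fun _ =>
    MeasurableSet.iInter fun _ => (C.measD m) (measurableSet_singleton _)

lemma measurableSet_Apath (C : DirectionChain d Ω μ) (n : ℕ)
    (p : Fin (n+1) → {x // x ∈ Vd d}) : MeasurableSet (Apath C n p) :=
  measurableSet_eventEq C (pext p) (n+1)

lemma iUnion_Apath (C : DirectionChain d Ω μ) (n : ℕ) :
    ⋃ p : Fin (n+1) → {x // x ∈ Vd d}, Apath C n p = Set.univ := by
  ext ω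
  simp only [Set.mem_iUnion, Set.mem_univ, iff_true]
  refine ⟨fun i => ⟨C.D ((i : ℕ) + 1) ω, mem_Vd.mpr (C.D_mem _ ω)⟩, fun m h1 h2 => ?_⟩
  obtain ⟨m, rfl⟩ : ∃ m', m = m' + 1 := ⟨m - 1, by omega⟩
  rw [pext_eq _ h2]
  rfl

lemma pairwise_disjoint_Apath (C : DirectionChain d Ω μ) (n : ℕ) :
    Pairwise (Function.onFun Disjoint (Apath C n)) := by
  intro p p' hne
  rw [Function.onFun, Set.disjoint_left]
  intro ω hω hω'
  apply hne
  funext i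
  apply Subtype.ext
  have e1 := hω ((i : ℕ) + 1) (by omega) (by omega)
  have e2 := hω' ((i : ℕ) + 1) (by omega) (by omega)
  have hp : pext p ((i:ℕ)+1) = (p i : EuclideanSpace ℝ (Fin d)) := by
    rw [pext_eq _ (by omega)]
    congr 1
  have hp' : pext p' ((i:ℕ)+1) = (p' i : EuclideanSpace ℝ (Fin d)) := by
    rw [pext_eq _ (by omega)]
    congr 1
  rw [← hp, ← hp', ← e1, ← e2]

lemma measure_Apath_adm (C : DirectionChain d Ω μ) {n : ℕ}
    {p : Fin (n+1) → {x // x ∈ Vd d}} (h : adm n p) :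
    μ (Apath C n p) = ENNReal.ofReal ((2*(d:ℝ))⁻¹ * ((2*(d:ℝ)-1)⁻¹)^n) := by
  have := C.D_path (n+1) (by omega) (pext p) (pext_mem p) (fun m h1 h2 => h m h1 h2)
  simpa [Apath] using this

lemma measure_Apath_nonadm (hd : 1 ≤ d) (C : DirectionChain d Ω μ) {n : ℕ}
    {p : Fin (n+1) → {x // x ∈ Vd d}} (h : ¬ adm n p) :
    μ (Apath C n p) = 0 := by
  unfold adm at h
  push_neg at h
  classical
  -- the first violation
  let P : ℕ → Prop := fun j => 1 ≤ j ∧ j + 1 ≤ n + 1 ∧ pext p (j+1) = pext p j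
  have hP : ∃ j, P j := by
    obtain ⟨j, h1, h2, h3⟩ := h
    exact ⟨j, h1, h2, h3⟩
  set j := Nat.find hP with hjdef
  obtain ⟨hj1, hj2, hjeq⟩ : P j := Nat.find_spec hP
  have hmin : ∀ m, 1 ≤ m → m + 1 ≤ n + 1 → m < j → pext p (m+1) ≠ pext p m := by
    intro m h1 h2 hm heq
    exact Nat.find_min hP hm ⟨h1, h2, heq⟩
  set cst : ℝ := (2*(d:ℝ))⁻¹ with hcst
  set q : ℝ := (2*(d:ℝ)-1)⁻¹ with hqdef
  have hd1 : (1:ℝ) ≤ (d:ℝ) := by exact_mod_cast hd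
  have h2d1 : (0:ℝ) < 2*(d:ℝ) - 1 := by linarith
  -- the sub-paths
  set v : {x // x ∈ Vd d} → ℕ → EuclideanSpace ℝ (Fin d) :=
    fun w m => if m ≤ j then pext p m else (w : EuclideanSpace ℝ (Fin d)) with hvdef
  set B : {x // x ∈ Vd d} → Set Ω :=
    fun w => {ω | ∀ m, 1 ≤ m → m ≤ j+1 → C.D m ω = v w m} with hBdef
  set w0 : {x // x ∈ Vd d} := ⟨pext p j, mem_Vd.mpr (pext_mem p j)⟩ with hw0
  -- measure of the parent event
  have hBpar : μ {ω | ∀ m, 1 ≤ m → m ≤ j → C.D m ω = pext p m}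
      = ENNReal.ofReal (cst * q^(j-1)) := by
    exact C.D_path j hj1 (pext p) (pext_mem p)
      (fun m h1 h2 => hmin m h1 (by omega) (by omega))
  -- measures of the child events
  have hBw : ∀ w : {x // x ∈ Vd d}, (w : EuclideanSpace ℝ (Fin d)) ≠ pext p j →
      μ (B w) = ENNReal.ofReal (cst * q^j) := by
    intro w hw
    have := C.D_path (j+1) (by omega) (v w)
      (fun m => by
        by_cases hm : m ≤ j
        · simp only [hvdef, if_pos hm]; exact pext_mem p m
        · simp only [hvdef, if_neg hm]; exact mem_Vd.mp w.2)
      (fun m h1 h2 => by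
        rcases Nat.lt_or_ge m j with hmj | hmj
        · show (if m + 1 ≤ j then pext p (m+1) else (w : EuclideanSpace ℝ (Fin d)))
              ≠ (if m ≤ j then pext p m else (w : EuclideanSpace ℝ (Fin d)))
          rw [if_pos (by omega : m + 1 ≤ j), if_pos (by omega : m ≤ j)]
          exact hmin m h1 (by omega) hmj
        · have hmj' : m = j := by omega
          rw [hmj']
          show (if j + 1 ≤ j then pext p (j+1) else (w : EuclideanSpace ℝ (Fin d)))
              ≠ (if j ≤ j then pext p j else (w : EuclideanSpace ℝ (Fin d)))
          rw [if_neg (by omega : ¬ (j+1 ≤ j)), if_pos (le_refl j)]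
          exact hw)
    exact this
  -- the children partition the parent
  have hcover : {ω | ∀ m, 1 ≤ m → m ≤ j → C.D m ω = pext p m}
      = ⋃ w : {x // x ∈ Vd d}, B w := by
    ext ω
    simp only [Set.mem_setOf_eq, Set.mem_iUnion]
    constructor
    · intro hω
      refine ⟨⟨C.D (j+1) ω, mem_Vd.mpr (C.D_mem _ ω)⟩, fun m h1 h2 => ?_⟩
      by_cases hm : m ≤ j
      · simp only [hvdef, if_pos hm]; exact hω m h1 hm
      · have : m = j + 1 := by omega
        subst this
        simp only [hvdef, if_neg hm]
    · rintro ⟨w, hω⟩ m h1 h2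
      have h3 : C.D m ω = (if m ≤ j then pext p m else (w : EuclideanSpace ℝ (Fin d))) :=
        hω m h1 (by omega)
      rwa [if_pos h2] at h3
  have hdisj : Pairwise (Function.onFun Disjoint B) := by
    intro w w' hne
    rw [Function.onFun, Set.disjoint_left]
    intro ω hω hω'
    apply hne
    apply Subtype.ext
    have e1 := hω (j+1) (by omega) (le_refl _)
    have e2 := hω' (j+1) (by omega) (le_refl _)
    rw [hvdef] at e1 e2
    simp only [if_neg (by omega : ¬ (j+1 ≤ j))] at e1 e2
    rw [← e1, ← e2]
  have hmeasB : ∀ w, MeasurableSet (B w) := fun w => measurableSet_eventEq C (v w) (j+1)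
  have hsum : μ {ω | ∀ m, 1 ≤ m → m ≤ j → C.D m ω = pext p m}
      = ∑ w : {x // x ∈ Vd d}, μ (B w) := by
    rw [hcover, measure_iUnion hdisj hmeasB, tsum_fintype]
  -- split off the bad child
  have hsplit : ∑ w : {x // x ∈ Vd d}, μ (B w)
      = μ (B w0) + ((2*d-1 : ℕ) : ℝ≥0∞) * ENNReal.ofReal (cst * q^j) := by
    rw [← Finset.add_sum_erase Finset.univ _ (Finset.mem_univ w0)]
    congr 1
    calc ∑ w ∈ Finset.univ.erase w0, μ (B w)
        = ∑ _w ∈ Finset.univ.erase w0, ENNReal.ofReal (cst * q^j) :=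
          Finset.sum_congr rfl (fun w hw => hBw w (fun hc => (Finset.mem_erase.mp hw).1
            (Subtype.ext hc)))
      _ = ((2*d-1 : ℕ) : ℝ≥0∞) * ENNReal.ofReal (cst * q^j) := by
          rw [Finset.sum_const, nsmul_eq_mul, Finset.card_erase_of_mem (Finset.mem_univ w0),
            Finset.card_univ, Fintype.card_coe, card_Vd]
  -- the key cancellation
  have hreal : cst * q^(j-1) = (2*(d:ℝ)-1) * (cst * q^j) := by
    have hj' : j = (j-1) + 1 := by omega
    have hq1 : (2*(d:ℝ)-1) * q = 1 := mul_inv_cancel₀ (ne_of_gt h2d1)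
    calc cst * q^(j-1) = cst * q^(j-1) * ((2*(d:ℝ)-1) * q) := by rw [hq1, mul_one]
    _ = (2*(d:ℝ)-1) * (cst * q^((j-1)+1)) := by rw [pow_succ]; ring
    _ = (2*(d:ℝ)-1) * (cst * q^j) := by rw [← hj']
  have hcast : ENNReal.ofReal (cst * q^(j-1))
      = ((2*d-1 : ℕ) : ℝ≥0∞) * ENNReal.ofReal (cst * q^j) := by
    rw [hreal, ENNReal.ofReal_mul (le_of_lt h2d1)]
    congr 1
    have : (2*(d:ℝ)-1) = ((2*d-1 : ℕ) : ℝ) := by push_cast [Nat.cast_sub (by omega : 1 ≤ 2*d)]; ring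
    rw [this, ENNReal.ofReal_natCast]
  have hzero : μ (B w0) = 0 := by
    have heq : μ (B w0) + ((2*d-1 : ℕ) : ℝ≥0∞) * ENNReal.ofReal (cst * q^j)
        = 0 + ((2*d-1 : ℕ) : ℝ≥0∞) * ENNReal.ofReal (cst * q^j) := by
      rw [zero_add, ← hsplit, ← hsum, hBpar, hcast]
    exact (ENNReal.add_left_inj (ENNReal.mul_ne_top (ENNReal.natCast_ne_top _)
      ENNReal.ofReal_ne_top)).mp heq
  -- conclude
  refine le_antisymm ?_ zero_le
  rw [← hzero]
  apply measure_mono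
  intro ω hω m h1 h2
  show C.D m ω = (if m ≤ j then pext p m else (w0 : EuclideanSpace ℝ (Fin d)))
  by_cases hm : m ≤ j
  · rw [if_pos hm]
    exact hω m h1 (by omega)
  · have hm' : m = j + 1 := by omega
    rw [if_neg hm]
    show C.D m ω = pext p j
    rw [hm']
    have h5 := hω (j+1) (by omega) (by omega)
    rw [h5, hjeq]


lemma count_fact (hd : 1 ≤ d) (C : DirectionChain d Ω μ) (n : ℕ) :
    ((Padm d n).card : ℝ) * ((2*(d:ℝ))⁻¹ * ((2*(d:ℝ)-1)⁻¹)^n) = 1 := by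
  have hd1 : (1:ℝ) ≤ (d:ℝ) := by exact_mod_cast hd
  have hx : (0:ℝ) ≤ (2*(d:ℝ))⁻¹ * ((2*(d:ℝ)-1)⁻¹)^n :=
    mul_nonneg (inv_nonneg.mpr (by linarith)) (pow_nonneg (inv_nonneg.mpr (by linarith)) n)
  have hterm : ∀ p : Fin (n+1) → {x // x ∈ Vd d}, μ (Apath C n p)
      = if adm n p then ENNReal.ofReal ((2*(d:ℝ))⁻¹ * ((2*(d:ℝ)-1)⁻¹)^n) else 0 := by
    intro p
    by_cases hp : adm n p
    · rw [if_pos hp, measure_Apath_adm C hp]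
    · rw [if_neg hp, measure_Apath_nonadm hd C hp]
  have key : (1 : ℝ≥0∞) = ((Padm d n).card : ℝ≥0∞)
      * ENNReal.ofReal ((2*(d:ℝ))⁻¹ * ((2*(d:ℝ)-1)⁻¹)^n) := by
    have h1 : (1 : ℝ≥0∞) = μ Set.univ := measure_univ.symm
    rw [← iUnion_Apath C n, measure_iUnion (pairwise_disjoint_Apath C n)
      (measurableSet_Apath C n), tsum_fintype] at h1
    rw [h1, Finset.sum_congr rfl fun p _ => hterm p, ← Finset.sum_filter, ← Padm,
      Finset.sum_const, nsmul_eq_mul]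
  have h2 := congrArg ENNReal.toReal key
  rw [ENNReal.toReal_one, ENNReal.toReal_mul, ENNReal.toReal_natCast,
    ENNReal.toReal_ofReal hx] at h2
  exact h2.symm

lemma integral_inner_eq (hd : 1 ≤ d) (C : DirectionChain d Ω μ) {n a b : ℕ}
    (ha1 : 1 ≤ a) (ha : a ≤ n+1) (hb1 : 1 ≤ b) (hb : b ≤ n+1) :
    ∫ ω, (inner ℝ (C.D a ω) (C.D b ω) : ℝ) ∂μ
      = ∑ p ∈ Padm d n,
          (inner ℝ (pext p a) (pext p b) : ℝ) * ((2*(d:ℝ))⁻¹ * ((2*(d:ℝ)-1)⁻¹)^n) := by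
  have hd1 : (1:ℝ) ≤ (d:ℝ) := by exact_mod_cast hd
  have hx : (0:ℝ) ≤ (2*(d:ℝ))⁻¹ * ((2*(d:ℝ)-1)⁻¹)^n :=
    mul_nonneg (inv_nonneg.mpr (by linarith)) (pow_nonneg (inv_nonneg.mpr (by linarith)) n)
  set f : Ω → ℝ := fun ω => (inner ℝ (C.D a ω) (C.D b ω) : ℝ) with hf
  have hmeas : Measurable f := (C.measD a).inner (C.measD b)
  have hint : Integrable f μ := by
    refine Integrable.mono' (integrable_const (1:ℝ)) hmeas.aestronglyMeasurable ?_
    filter_upwards with ω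
    rw [Real.norm_eq_abs]
    calc |f ω| ≤ ‖C.D a ω‖ * ‖C.D b ω‖ := abs_real_inner_le_norm _ _
    _ = 1 := by
      rw [norm_of_mem_unitVecs (C.D_mem a ω), norm_of_mem_unitVecs (C.D_mem b ω), mul_one]
  have h1 : ∫ ω, f ω ∂μ
      = ∫ ω in ⋃ p : Fin (n+1) → {x // x ∈ Vd d}, Apath C n p, f ω ∂μ := by
    rw [iUnion_Apath C n, setIntegral_univ]
  rw [h1, integral_iUnion (measurableSet_Apath C n) (pairwise_disjoint_Apath C n)
    (by rw [iUnion_Apath]; exact hint.integrableOn), tsum_fintype]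
  have hterm : ∀ p, ∫ ω in Apath C n p, f ω ∂μ
      = (inner ℝ (pext p a) (pext p b) : ℝ) * (μ (Apath C n p)).toReal := by
    intro p
    rw [setIntegral_congr_fun (measurableSet_Apath C n p)
      (fun ω hω => by
        show f ω = (inner ℝ (pext p a) (pext p b) : ℝ)
        rw [hf]
        simp only
        rw [hω a ha1 ha, hω b hb1 hb])]
    rw [setIntegral_const, smul_eq_mul, mul_comm]
    rfl
  have hterm2 : ∀ p, (inner ℝ (pext p a) (pext p b) : ℝ) * (μ (Apath C n p)).toReal
      = if adm n p then
          (inner ℝ (pext p a) (pext p b) : ℝ) * ((2*(d:ℝ))⁻¹ * ((2*(d:ℝ)-1)⁻¹)^n) else 0 := by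
    intro p
    by_cases hp : adm n p
    · rw [if_pos hp, measure_Apath_adm C hp, ENNReal.toReal_ofReal hx]
    · rw [if_neg hp, measure_Apath_nonadm hd C hp]
      simp
  rw [Finset.sum_congr rfl fun p _ => hterm p,
    Finset.sum_congr rfl fun p _ => hterm2 p, ← Finset.sum_filter]
  rfl


end PWaux

/-- For all `m ≥ 1` and `k ≥ 1`, `E(D_m ⬝ D_{m+k}) = (-1/(2d-1))^k`. -/
theorem persistent_direction_correlation
    {d : ℕ} (hd : 1 ≤ d) {Ω : Type} [MeasurableSpace Ω] {μ : Measure Ω}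
    [IsProbabilityMeasure μ] (C : DirectionChain d Ω μ) :
    ∀ m k : ℕ, 1 ≤ m → 1 ≤ k →
      ∫ ω, (inner ℝ (C.D m ω) (C.D (m + k) ω) : ℝ) ∂μ
        = (-1 / (2 * (d : ℝ) - 1)) ^ k := by
  intro m k hm hk
  classical
  have hmk : m + k = (m + k - 1) + 1 := by omega
  rw [hmk]
  rw [PWaux.integral_inner_eq hd C hm (by omega) (by omega) (le_refl _)]
  rw [← Finset.sum_mul]
  have hps : ∑ p ∈ PWaux.Padm d (m+k-1),
      (inner ℝ (PWaux.pext p m) (PWaux.pext p ((m+k-1)+1)) : ℝ)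
      = PWaux.pathSum d (m+k-1) m := rfl
  rw [hps]
  have h2 : m + k - 1 = m - 1 + k := by omega
  rw [h2, PWaux.pathSum_eq m k hm]
  have hc := PWaux.count_fact hd C (m-1)
  have hq : ((-1:ℝ)/(2*(d:ℝ)-1))^k = (-1:ℝ)^k * ((2*(d:ℝ)-1)⁻¹)^k := by
    rw [div_eq_mul_inv, mul_pow]
  rw [hq, pow_add]
  linear_combination ((-1:ℝ)^k * ((2*(d:ℝ)-1)⁻¹)^k) * hc
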